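/- Let p be a general assignment mechanism, let Ŷ(z) be linear estimators of Ȳ(z) that are unbiased for every choice of potential outcomes, let g be a contrast coefficient function and τ̂ = Σ_z g(z)Ŷ(z). Suppose the constants M, M_i(z), together with M_{ii}(z) = g(z)²B_{ii}(z,z) and M_{ii*}(z,z*) = g(z)g(z*)B_{ii*}(z,z*), satisfy the variance representation of Theorem 1 for every choice of potential outcomes. For any Q = (q_{ii*}) ∈ ℚ, define M̃_{ii*}(z,z*) = g(z) g(z*) ( B_{ii*}(z,z*) + q_{ii*} − 1/N² ) for i ≠ i*, and V_Q(τ̂) = M + Σ_{z∈Z} Σ_{i=1}^N ( M_i(z) Y_i(z) + M_{ii}(z) Y_i(z)² ) + Σ_{z∈Z} Σ_{z*∈Z} Σ_{i=1}^N Σ_{i*≠i} M̃_{ii*}(z,z*) Y_i(z) Y_{i*}(z*). Then: (1) Var(τ̂) = V_Q(τ̂) − τ′Qτ, where τ = (τ_1,…,τ_N)′ is the vector of unit-level contrasts; and (2) Var(τ̂) ≤ V_Q(τ̂). -/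

import Mathlib

open Finset

/-- Expectation of a statistic `f` under a general assignment mechanism `p`. -/
def expect {N : ℕ} {Z : Type*} [Fintype Z] (p : (Fin N → Z) → ℝ)
    (f : (Fin N → Z) → ℝ) : ℝ :=
  ∑ w : Fin N → Z, p w * f w

/-- Variance of a statistic `f` under a general assignment mechanism `p`. -/
def variance {N : ℕ} {Z : Type*} [Fintype Z] (p : (Fin N → Z) → ℝ)
    (f : (Fin N → Z) → ℝ) : ℝ :=
  expect p (fun w => (f w - expect p f) ^ 2)

/-- A linear estimator of the treatment mean `Ȳ(z)`. -/
def linEst {N : ℕ} {Z : Type*} [Fintype Z] [DecidableEq Z]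
    (a : (Fin N → Z) → Z → ℝ) (b : (Fin N → Z) → Z → Fin N → ℝ)
    (Y : Fin N → Z → ℝ) (z : Z) (w : Fin N → Z) : ℝ :=
  a w z + ∑ i ∈ univ.filter (fun i => w i = z), b w z i * Y i z

/-- `B_{ii*}(z,z*) = ∑_{w : w(i)=z, w(i*)=z*} p(w) b_i(w,z) b_{i*}(w,z*)`. -/
def Bcoef {N : ℕ} {Z : Type*} [Fintype Z] [DecidableEq Z]
    (p : (Fin N → Z) → ℝ) (b : (Fin N → Z) → Z → Fin N → ℝ)
    (i iStar : Fin N) (z zStar : Z) : ℝ :=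
  ∑ w ∈ univ.filter (fun w : Fin N → Z => w i = z ∧ w iStar = zStar),
    p w * (b w z i * b w zStar iStar)

/-- The quantity `V_Q(τ̂)`, obtained from the variance representation of
Theorem 1 by replacing `M_{ii*}(z,z*)` with
`M̃_{ii*}(z,z*) = g(z)g(z*)(B_{ii*}(z,z*) + q_{ii*} − 1/N²)` and dropping `τ̄²`. -/
noncomputable def VQ {N : ℕ} {Z : Type*} [Fintype Z] [DecidableEq Z]
    (p : (Fin N → Z) → ℝ) (b : (Fin N → Z) → Z → Fin N → ℝ)
    (g : Z → ℝ) (M : ℝ) (Mi : Fin N → Z → ℝ)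
    (Q : Matrix (Fin N) (Fin N) ℝ) (Y : Fin N → Z → ℝ) : ℝ :=
  M + ∑ z, ∑ i, (Mi i z * Y i z + (g z) ^ 2 * Bcoef p b i i z z * (Y i z) ^ 2)
    + ∑ z, ∑ zStar, ∑ i, ∑ iStar ∈ univ.erase i,
        g z * g zStar * (Bcoef p b i iStar z zStar + Q i iStar - 1 / (N : ℝ) ^ 2)
          * (Y i z * Y iStar zStar)

/-- Theorem 2, parts (1) and (2): under a general assignment mechanism with
unbiased linear estimators and constants `M`, `M_i(z)` realizing the variance
representation of Theorem 1, for any symmetric psd matrix `Q` with zero row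
sums and diagonal entries `1/N²`:
(1) `Var(τ̂) = V_Q(τ̂) − τ′Qτ`, where `τ` is the vector of unit-level contrasts;
(2) `Var(τ̂) ≤ V_Q(τ̂)`. -/

lemma quad_sum {N : ℕ} {Z : Type*} [Fintype Z] (g : Z → ℝ) (Y : Fin N → Z → ℝ)
    (c : Fin N → Fin N → ℝ) :
    ∑ z : Z, ∑ zStar : Z, ∑ i : Fin N, ∑ iStar ∈ univ.erase i,
      g z * g zStar * c i iStar * (Y i z * Y iStar zStar)
    = ∑ i : Fin N, ∑ iStar ∈ univ.erase i,
        c i iStar * ((∑ z, g z * Y i z) * (∑ z, g z * Y iStar z)) := by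
  conv_lhs => rw [Finset.sum_congr rfl fun z _ => Finset.sum_comm]
  rw [Finset.sum_comm]
  conv_lhs => rw [Finset.sum_congr rfl fun i _ => Finset.sum_congr rfl fun z _ => Finset.sum_comm]
  conv_lhs => rw [Finset.sum_congr rfl fun i _ => Finset.sum_comm]
  refine Finset.sum_congr rfl fun i _ => Finset.sum_congr rfl fun iStar _ => ?_
  rw [Finset.sum_mul_sum, Finset.mul_sum]
  refine Finset.sum_congr rfl fun z _ => ?_
  rw [Finset.mul_sum]
  exact Finset.sum_congr rfl fun zStar _ => by ring


lemma offdiag_split {N : ℕ} (c : ℝ) (Q : Matrix (Fin N) (Fin N) ℝ) (T : Fin N → ℝ) :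
    ∑ i : Fin N, ∑ iStar ∈ univ.erase i, (Q i iStar - c) * (T i * T iStar)
    = (∑ i : Fin N, ∑ iStar ∈ univ.erase i, Q i iStar * (T i * T iStar))
      - c * ∑ i : Fin N, ∑ iStar ∈ univ.erase i, T i * T iStar := by
  rw [Finset.mul_sum, ← Finset.sum_sub_distrib]
  refine Finset.sum_congr rfl fun i _ => ?_
  rw [Finset.mul_sum, ← Finset.sum_sub_distrib]
  exact Finset.sum_congr rfl fun iStar _ => by ring

lemma qf_split {N : ℕ} (Q : Matrix (Fin N) (Fin N) ℝ)
    (hdiag : ∀ i, Q i i = 1 / (N : ℝ) ^ 2) (T : Fin N → ℝ) :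
    ∑ i : Fin N, ∑ iStar : Fin N, Q i iStar * T i * T iStar
    = (1 / (N : ℝ) ^ 2) * ∑ i : Fin N, (T i) ^ 2
      + ∑ i : Fin N, ∑ iStar ∈ univ.erase i, Q i iStar * (T i * T iStar) := by
  rw [Finset.mul_sum, ← Finset.sum_add_distrib]
  refine Finset.sum_congr rfl fun i _ => ?_
  rw [← Finset.add_sum_erase _ (fun iStar => Q i iStar * T i * T iStar) (Finset.mem_univ i),
    hdiag i]
  rw [show ∀ S : ℝ, 1 / (N:ℝ)^2 * T i * T i + S = 1 / (N:ℝ)^2 * T i ^ 2 + S from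
    fun S => by ring]
  congr 1
  exact Finset.sum_congr rfl fun iStar _ => by ring

lemma sq_split {N : ℕ} (T : Fin N → ℝ) :
    ((∑ i : Fin N, T i) / (N : ℝ)) ^ 2
    = (1 / (N : ℝ) ^ 2) * ∑ i : Fin N, (T i) ^ 2
      + (1 / (N : ℝ) ^ 2) * ∑ i : Fin N, ∑ iStar ∈ univ.erase i, T i * T iStar := by
  have h : (∑ i : Fin N, T i) ^ 2
      = ∑ i : Fin N, ((T i) ^ 2 + ∑ iStar ∈ univ.erase i, T i * T iStar) := by
    rw [sq, Finset.sum_mul_sum]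
    refine Finset.sum_congr rfl fun i _ => ?_
    rw [← Finset.add_sum_erase _ (fun iStar => T i * T iStar) (Finset.mem_univ i), sq]
  rw [div_pow, h, Finset.sum_add_distrib]
  ring

lemma psd_nonneg {N : ℕ} (Q : Matrix (Fin N) (Fin N) ℝ) (hQ : Q.PosSemidef)
    (T : Fin N → ℝ) : 0 ≤ ∑ i : Fin N, ∑ iStar : Fin N, Q i iStar * T i * T iStar := by
  have h := hQ.dotProduct_mulVec_nonneg T
  simp only [dotProduct, Matrix.mulVec, dotProduct, star_trivial] at h
  calc (0:ℝ) ≤ ∑ i, T i * ∑ j, Q i j * T j := h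
    _ = ∑ i : Fin N, ∑ iStar : Fin N, Q i iStar * T i * T iStar := by
        refine Finset.sum_congr rfl fun i _ => ?_
        rw [Finset.mul_sum]
        exact Finset.sum_congr rfl fun j _ => by ring

theorem theorem2_parts1and2 {N : ℕ} {Z : Type*} [Fintype Z] [DecidableEq Z]
    (hN : 2 ≤ N) (hZ : 2 ≤ Fintype.card Z)
    (p : (Fin N → Z) → ℝ) (hp0 : ∀ w, 0 ≤ p w) (hp1 : ∑ w : Fin N → Z, p w = 1)
    (a : (Fin N → Z) → Z → ℝ) (b : (Fin N → Z) → Z → Fin N → ℝ)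
    (hunb : ∀ (Y : Fin N → Z → ℝ) (z : Z),
      expect p (linEst a b Y z) = (∑ i, Y i z) / N)
    (g : Z → ℝ) (hgne : g ≠ 0) (hg0 : ∑ z, g z = 0)
    (M : ℝ) (Mi : Fin N → Z → ℝ)
    (hrep : ∀ Y : Fin N → Z → ℝ,
      variance p (fun w => ∑ z, g z * linEst a b Y z w) =
        M + ∑ z, ∑ i, (Mi i z * Y i z + (g z) ^ 2 * Bcoef p b i i z z * (Y i z) ^ 2)
          + ∑ z, ∑ zStar, ∑ i, ∑ iStar ∈ univ.erase i,
              g z * g zStar * Bcoef p b i iStar z zStar * (Y i z * Y iStar zStar)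
          - (∑ z, g z * ((∑ i, Y i z) / N)) ^ 2)
    (Q : Matrix (Fin N) (Fin N) ℝ) (hQ : Q.PosSemidef)
    (hrow : ∀ i, ∑ j, Q i j = 0) (hdiag : ∀ i, Q i i = 1 / (N : ℝ) ^ 2) :
    ∀ Y : Fin N → Z → ℝ,
      variance p (fun w => ∑ z, g z * linEst a b Y z w) =
        VQ p b g M Mi Q Y
          - ∑ i, ∑ iStar, Q i iStar * (∑ z, g z * Y i z) * (∑ z, g z * Y iStar z) ∧
      variance p (fun w => ∑ z, g z * linEst a b Y z w) ≤ VQ p b g M Mi Q Y := by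
  intro Y
  have hbar : ∑ z, g z * ((∑ i, Y i z) / N)
      = (∑ i, ∑ z, g z * Y i z) / (N : ℝ) := by
    calc ∑ z, g z * ((∑ i, Y i z) / N)
        = ∑ z, ∑ i, g z * Y i z / (N : ℝ) := by
          refine Finset.sum_congr rfl fun z _ => ?_
          rw [← mul_div_assoc, Finset.mul_sum, Finset.sum_div]
      _ = ∑ i, ∑ z, g z * Y i z / (N : ℝ) := Finset.sum_comm
      _ = (∑ i, ∑ z, g z * Y i z) / (N : ℝ) := by
          rw [Finset.sum_div]
          exact Finset.sum_congr rfl fun i _ => (Finset.sum_div _ _ _).symm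
  have hdiff :
      (∑ z, ∑ zStar, ∑ i, ∑ iStar ∈ univ.erase i,
        g z * g zStar * (Bcoef p b i iStar z zStar + Q i iStar - 1 / (N : ℝ) ^ 2)
          * (Y i z * Y iStar zStar))
      - (∑ z, ∑ zStar, ∑ i, ∑ iStar ∈ univ.erase i,
        g z * g zStar * Bcoef p b i iStar z zStar * (Y i z * Y iStar zStar))
      = ∑ i, ∑ iStar ∈ univ.erase i, (Q i iStar - 1 / (N : ℝ) ^ 2)
          * ((∑ z, g z * Y i z) * (∑ z, g z * Y iStar z)) := by
    rw [← quad_sum g Y (fun i iStar => Q i iStar - 1 / (N : ℝ) ^ 2),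
      ← Finset.sum_sub_distrib]
    refine Finset.sum_congr rfl fun z _ => ?_
    rw [← Finset.sum_sub_distrib]
    refine Finset.sum_congr rfl fun zStar _ => ?_
    rw [← Finset.sum_sub_distrib]
    refine Finset.sum_congr rfl fun i _ => ?_
    rw [← Finset.sum_sub_distrib]
    exact Finset.sum_congr rfl fun iStar _ => by ring
  have hqf := qf_split Q hdiag (fun i => ∑ z, g z * Y i z)
  have hsq := sq_split (N := N) (fun i => ∑ z, g z * Y i z)
  have hoff := offdiag_split (1 / (N : ℝ) ^ 2) Q (fun i => ∑ z, g z * Y i z)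
  have key :
      (∑ z, ∑ zStar, ∑ i, ∑ iStar ∈ univ.erase i,
        g z * g zStar * (Bcoef p b i iStar z zStar + Q i iStar - 1 / (N : ℝ) ^ 2)
          * (Y i z * Y iStar zStar))
      - (∑ z, ∑ zStar, ∑ i, ∑ iStar ∈ univ.erase i,
        g z * g zStar * Bcoef p b i iStar z zStar * (Y i z * Y iStar zStar))
      = (∑ i, ∑ iStar, Q i iStar * (∑ z, g z * Y i z) * (∑ z, g z * Y iStar z))
        - ((∑ i, ∑ z, g z * Y i z) / (N : ℝ)) ^ 2 := by
    rw [hdiff, hoff, hqf, hsq]; ring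
  have part1 :
      variance p (fun w => ∑ z, g z * linEst a b Y z w) =
        VQ p b g M Mi Q Y
          - ∑ i, ∑ iStar, Q i iStar * (∑ z, g z * Y i z) * (∑ z, g z * Y iStar z) := by
    rw [hrep Y, VQ, hbar]
    linarith [key]
  refine ⟨part1, ?_⟩
  have hpos := psd_nonneg Q hQ (fun i => ∑ z, g z * Y i z)
  linarith [part1, hpos]
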